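/- Let n be even and 1 ≤ m ≤ n/2. For the function J_m(x) = (x_1 x_3 ⋯ x_{2m−1})/(x_2 x_4 ⋯ x_{2m}) and every x in the positive orthant (0,∞)^n, the log-canonical Poisson bracket satisfies {J_m, x_j}(x) = J_m(x) x_j if j ≤ 2m, and {J_m, x_j}(x) = 0 if j > 2m. -/
import Mathlib


/-- Partial derivative `∂f/∂x_i` of a function on `ℝⁿ`. -/
noncomputable def pd {n : ℕ} (f : (Fin n → ℝ) → ℝ) (x : Fin n → ℝ) (i : Fin n) : ℝ :=
  fderiv ℝ f x (Pi.single i 1)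

/-- The log-canonical Poisson bracket
`{f,g}(x) = Σ_{i<j} x_i x_j (∂f/∂x_i ∂g/∂x_j − ∂f/∂x_j ∂g/∂x_i)`. -/
noncomputable def pb {n : ℕ} (f g : (Fin n → ℝ) → ℝ) (x : Fin n → ℝ) : ℝ :=
  ∑ i : Fin n, ∑ j : Fin n,
    if i < j then x i * x j * (pd f x i * pd g x j - pd f x j * pd g x i) else 0

/-- `J_m(x) = (x_1 x_3 ⋯ x_{2m−1})/(x_2 x_4 ⋯ x_{2m})` (1-based; here indices are 0-based,
so the numerator ranges over even indices `< 2m` and the denominator over odd indices `< 2m`). -/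
noncomputable def Jfun {n : ℕ} (m : ℕ) (x : Fin n → ℝ) : ℝ :=
  (∏ i ∈ Finset.univ.filter (fun i : Fin n => i.val < 2*m ∧ Even i.val), x i) /
  (∏ i ∈ Finset.univ.filter (fun i : Fin n => i.val < 2*m ∧ Odd i.val), x i)

/-- `I_m(x) = (x_{2m+2} x_{2m+4} ⋯ x_n)/(x_{2m+1} x_{2m+3} ⋯ x_{n−1})` (1-based; here 0-based:
numerator over odd indices `≥ 2m`, denominator over even indices `≥ 2m`). -/
noncomputable def Ifun {n : ℕ} (m : ℕ) (x : Fin n → ℝ) : ℝ :=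
  (∏ i ∈ Finset.univ.filter (fun i : Fin n => 2*m ≤ i.val ∧ Odd i.val), x i) /
  (∏ i ∈ Finset.univ.filter (fun i : Fin n => 2*m ≤ i.val ∧ Even i.val), x i)

/-- `v_m(x) = a_1 x_1 + ⋯ + a_m x_m` (sum of the first `m` coordinates, 0-based indices `< m`). -/
def vfun {n : ℕ} (a : Fin n → ℝ) (m : ℕ) (x : Fin n → ℝ) : ℝ :=
  ∑ j ∈ Finset.univ.filter (fun j : Fin n => j.val < m), a j * x j

/-- `F_m = v_{2m} I_m`. -/
noncomputable def Ffun {n : ℕ} (a : Fin n → ℝ) (m : ℕ) (x : Fin n → ℝ) : ℝ :=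
  vfun a (2*m) x * Ifun m x

/-- The Hamiltonian `H(x) = Σ_i (a_i x_i + k_i log x_i)`. -/
noncomputable def Hfun {n : ℕ} (a k : Fin n → ℝ) (x : Fin n → ℝ) : ℝ :=
  ∑ i, (a i * x i + k i * Real.log (x i))

/-! ### Auxiliary lemmas -/

/-- The sign `ε_i`: `+1` on even indices `< 2m`, `-1` on odd indices `< 2m`, `0` otherwise. -/
noncomputable def eps (m i : ℕ) : ℝ := if i < 2*m then (if Even i then 1 else -1) else 0

lemma esum (m k : ℕ) : ∑ i ∈ Finset.range k, eps m i = if k < 2*m ∧ Odd k then 1 else 0 := by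
  induction k with
  | zero => simp [Nat.odd_iff]
  | succ k ih =>
    rw [Finset.sum_range_succ, ih]
    simp only [eps, Nat.odd_iff, Nat.even_iff]
    split_ifs <;> (try omega) <;> norm_num

lemma sum_ite_lt (f : ℕ → ℝ) {k n : ℕ} (h : k ≤ n) :
    ∑ i ∈ Finset.range n, (if i < k then f i else 0) = ∑ i ∈ Finset.range k, f i := by
  rw [← Finset.sum_filter]
  congr 1
  ext i
  simp only [Finset.mem_filter, Finset.mem_range]
  omega

lemma sum_ite_gt (f : ℕ → ℝ) {k n : ℕ} (h : k < n) :
    ∑ i ∈ Finset.range n, (if k < i then f i else 0)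
      = (∑ i ∈ Finset.range n, f i) - ∑ i ∈ Finset.range (k+1), f i := by
  have h2 : ∑ i ∈ Finset.range n, f i
      = ∑ i ∈ Finset.range n, ((if k < i then f i else 0) + (if i < k+1 then f i else 0)) := by
    apply Finset.sum_congr rfl
    intro i _
    rcases lt_or_ge k i with h' | h'
    · simp [h', show ¬ i < k+1 by omega]
    · simp [show ¬ k < i by omega, show i < k+1 by omega]
  rw [h2, Finset.sum_add_distrib, sum_ite_lt f (by omega)]
  ring

lemma pd_coord {n : ℕ} (j : Fin n) (x : Fin n → ℝ) (i : Fin n) :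
    pd (fun y => y j) x i = if i = j then 1 else 0 := by
  have h : (fun y : Fin n → ℝ => y j)
      = (ContinuousLinearMap.proj j : (Fin n → ℝ) →L[ℝ] ℝ) := rfl
  unfold pd
  rw [h, ContinuousLinearMap.fderiv]
  simp [ContinuousLinearMap.proj_apply, Pi.single_apply, eq_comm]

lemma pd_J {n : ℕ} (m : ℕ) (x : Fin n → ℝ) (hx : ∀ i, 0 < x i) (i : Fin n) :
    x i * pd (Jfun m) x i = Jfun m x * eps m i.val := by
  classical
  set S := Finset.univ.filter (fun i : Fin n => i.val < 2*m ∧ Even i.val) with hS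
  set T := Finset.univ.filter (fun i : Fin n => i.val < 2*m ∧ Odd i.val) with hT
  set P := ∏ k ∈ S, x k with hPdef
  set Q := ∏ k ∈ T, x k with hQdef
  have hQpos : 0 < Q := Finset.prod_pos (fun k _ => hx k)
  have hQ0 : Q ≠ 0 := hQpos.ne'
  have hP' : HasFDerivAt (fun y : Fin n → ℝ => ∏ k ∈ S, y k)
      (∑ k ∈ S, (∏ l ∈ S.erase k, x l) • ContinuousLinearMap.proj k) x :=
    hasFDerivAt_finset_prod (𝕜 := ℝ)
  have hQ' : HasFDerivAt (fun y : Fin n → ℝ => ∏ k ∈ T, y k)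
      (∑ k ∈ T, (∏ l ∈ T.erase k, x l) • ContinuousLinearMap.proj k) x :=
    hasFDerivAt_finset_prod (𝕜 := ℝ)
  have hQinv : HasFDerivAt (𝕜 := ℝ) (fun y : Fin n → ℝ => (∏ k ∈ T, y k)⁻¹)
      ((-(Q^2)⁻¹) • (∑ k ∈ T, (∏ l ∈ T.erase k, x l) • ContinuousLinearMap.proj k)) x := by
    have hinv : HasDerivAt (fun t : ℝ => t⁻¹) (-(Q^2)⁻¹) Q := hasDerivAt_inv hQ0
    have h2 : HasDerivAt (fun t : ℝ => t⁻¹) (-(Q^2)⁻¹) ((fun y : Fin n → ℝ => ∏ k ∈ T, y k) x) := by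
      rw [show (fun y : Fin n → ℝ => ∏ k ∈ T, y k) x = Q from rfl]; exact hinv
    exact h2.comp_hasFDerivAt x hQ'
  have hJ : HasFDerivAt (𝕜 := ℝ) (Jfun m : (Fin n → ℝ) → ℝ)
      ((∏ k ∈ S, x k) • ((-(Q^2)⁻¹) • (∑ k ∈ T, (∏ l ∈ T.erase k, x l) • ContinuousLinearMap.proj k))
        + (∏ k ∈ T, x k)⁻¹ • (∑ k ∈ S, (∏ l ∈ S.erase k, x l) • ContinuousLinearMap.proj k)) x := by
    have hmul := hP'.mul hQinv
    have : (Jfun m : (Fin n → ℝ) → ℝ)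
        = fun y => (∏ k ∈ S, y k) * (∏ k ∈ T, y k)⁻¹ := by
      funext y; simp [Jfun, div_eq_mul_inv, hS, hT]
    rw [this]
    exact hmul
  unfold pd
  rw [hJ.fderiv]
  simp only [ContinuousLinearMap.add_apply, ContinuousLinearMap.smul_apply,
    ContinuousLinearMap.sum_apply, ContinuousLinearMap.proj_apply, Pi.single_apply,
    smul_eq_mul, mul_ite, mul_one, mul_zero, Finset.sum_ite_eq']
  have hJx : Jfun m x = P / Q := by simp [Jfun, hS, hT, hPdef, hQdef]
  have hiST : ¬ (i ∈ S ∧ i ∈ T) := by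
    rintro ⟨h1, h2⟩
    simp only [hS, hT, Finset.mem_filter] at h1 h2
    exact (Nat.not_odd_iff_even.mpr h1.2.2) h2.2.2
  by_cases hiS : i ∈ S
  · have hiT : i ∉ T := fun h => hiST ⟨hiS, h⟩
    have heps : eps m i.val = 1 := by
      simp only [hS, Finset.mem_filter] at hiS
      simp [eps, hiS.2.1, hiS.2.2]
    have hprod : x i * ∏ l ∈ S.erase i, x l = P := Finset.mul_prod_erase S x hiS
    have hE : ∏ l ∈ S.erase i, x l = P / x i := by
      rw [eq_div_iff (hx i).ne', mul_comm]; exact hprod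
    rw [hJx, heps]
    simp only [hiS, hiT, if_true, if_false, hE]
    try rw [← hQdef]
    field_simp [(hx i).ne', hQ0]
    ring
  · by_cases hiT : i ∈ T
    · have heps : eps m i.val = -1 := by
        simp only [hT, Finset.mem_filter] at hiT
        simp [eps, hiT.2.1, Nat.not_even_iff_odd.mpr hiT.2.2]
      have hprod : x i * ∏ l ∈ T.erase i, x l = Q := Finset.mul_prod_erase T x hiT
      have hE : ∏ l ∈ T.erase i, x l = Q / x i := by
        rw [eq_div_iff (hx i).ne', mul_comm]; exact hprod
      rw [hJx, heps]
      simp only [hiS, hiT, if_true, if_false, hE]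
      try rw [← hQdef]
      field_simp [(hx i).ne', hQ0]
      ring
    · have heps : eps m i.val = 0 := by
        simp only [hS, hT, Finset.mem_filter, Finset.mem_univ, true_and, not_and] at hiS hiT
        by_cases h : i.val < 2*m
        · rcases Nat.even_or_odd i.val with he | ho
          · exact absurd he (hiS h)
          · exact absurd ho (hiT h)
        · simp [eps, h]
      rw [heps]
      simp [hiS, hiT]

lemma pb_coord {n : ℕ} (f : (Fin n → ℝ) → ℝ) (x : Fin n → ℝ) (j : Fin n) :
    pb f (fun y => y j) x =
      (∑ i : Fin n, if i < j then x j * (x i * pd f x i) else 0)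
      - ∑ i : Fin n, if j < i then x j * (x i * pd f x i) else 0 := by
  unfold pb
  simp only [pd_coord]
  have h1 : ∀ i k : Fin n,
      (if i < k then x i * x k * (pd f x i * (if k = j then 1 else 0)
        - pd f x k * (if i = j then 1 else 0)) else 0)
      = (if i < k ∧ k = j then x i * x k * pd f x i else 0)
        - (if i < k ∧ i = j then x i * x k * pd f x k else 0) := by
    intro i k
    by_cases ha : i < k <;> by_cases hb : k = j <;> by_cases hc : i = j <;>
      simp [ha, hb, hc] <;> (try split_ifs) <;> ring
  simp only [h1, Finset.sum_sub_distrib]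
  have hA : ∀ i : Fin n,
      (∑ k : Fin n, if i < k ∧ k = j then x i * x k * pd f x i else 0)
        = if i < j then x j * (x i * pd f x i) else 0 := by
    intro i
    rw [Finset.sum_eq_single j]
    · by_cases h : i < j <;> simp [h] <;> ring
    · intro b _ hb; simp [hb]
    · simp
  have hB : (∑ i : Fin n, ∑ k : Fin n, if i < k ∧ i = j then x i * x k * pd f x k else 0)
      = ∑ k : Fin n, if j < k then x j * (x k * pd f x k) else 0 := by
    rw [Finset.sum_eq_single j]
    · apply Finset.sum_congr rfl
      intro k _
      by_cases h : j < k <;> simp [h] <;> ring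
    · intro b _ hb
      apply Finset.sum_eq_zero
      intro k _
      simp [hb]
    · simp
  rw [hB]
  congr 1
  exact Finset.sum_congr rfl (fun i _ => hA i)

/-- For even `n = 2N` and `1 ≤ m ≤ N`: `{J_m, x_j} = J_m x_j` for (1-based) `j ≤ 2m`
(0-based `j.val < 2m`) and `{J_m, x_j} = 0` for `j > 2m`. -/
theorem stmt_4 (N : ℕ) (m : ℕ) (hm1 : 1 ≤ m) (hm2 : m ≤ N)
    (x : Fin (2*N) → ℝ) (hx : ∀ i, 0 < x i) (j : Fin (2*N)) :
    (j.val < 2*m → pb (Jfun m) (fun y => y j) x = Jfun m x * x j) ∧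
    (2*m ≤ j.val → pb (Jfun m) (fun y => y j) x = 0) := by
  have key := pd_J m x hx
  have hjlt : (j : ℕ) < 2*N := j.isLt
  have hA : (∑ i : Fin (2*N), if i < j then x j * (x i * pd (Jfun m) x i) else 0)
      = x j * Jfun m x * (if (j:ℕ) < 2*m ∧ Odd (j:ℕ) then 1 else 0) := by
    calc (∑ i : Fin (2*N), if i < j then x j * (x i * pd (Jfun m) x i) else 0)
        = ∑ i : Fin (2*N), (fun t : ℕ => if t < (j:ℕ) then x j * (Jfun m x * eps m t) else 0) i.val := by
          apply Finset.sum_congr rfl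
          intro i _
          simp only [Fin.lt_def, key]
      _ = ∑ t ∈ Finset.range (2*N), (if t < (j:ℕ) then x j * (Jfun m x * eps m t) else 0) :=
          Fin.sum_univ_eq_sum_range (fun t : ℕ => if t < (j:ℕ) then x j * (Jfun m x * eps m t) else 0) (2*N)
      _ = ∑ t ∈ Finset.range (j:ℕ), x j * (Jfun m x * eps m t) := sum_ite_lt _ hjlt.le
      _ = x j * Jfun m x * ∑ t ∈ Finset.range (j:ℕ), eps m t := by
          rw [Finset.mul_sum]; apply Finset.sum_congr rfl; intro t _; ring
      _ = x j * Jfun m x * (if (j:ℕ) < 2*m ∧ Odd (j:ℕ) then 1 else 0) := by rw [esum]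
  have htot : ∑ t ∈ Finset.range (2*N), eps m t = 0 := by
    rw [esum]
    have : ¬ Odd (2*N) := by simp [Nat.odd_iff]
    simp [this]
  have hB : (∑ i : Fin (2*N), if j < i then x j * (x i * pd (Jfun m) x i) else 0)
      = - (x j * Jfun m x * (if (j:ℕ)+1 < 2*m ∧ Odd ((j:ℕ)+1) then 1 else 0)) := by
    calc (∑ i : Fin (2*N), if j < i then x j * (x i * pd (Jfun m) x i) else 0)
        = ∑ i : Fin (2*N), (fun t : ℕ => if (j:ℕ) < t then x j * (Jfun m x * eps m t) else 0) i.val := by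
          apply Finset.sum_congr rfl
          intro i _
          simp only [Fin.lt_def, key]
      _ = ∑ t ∈ Finset.range (2*N), (if (j:ℕ) < t then x j * (Jfun m x * eps m t) else 0) :=
          Fin.sum_univ_eq_sum_range (fun t : ℕ => if (j:ℕ) < t then x j * (Jfun m x * eps m t) else 0) (2*N)
      _ = (∑ t ∈ Finset.range (2*N), x j * (Jfun m x * eps m t))
            - ∑ t ∈ Finset.range ((j:ℕ)+1), x j * (Jfun m x * eps m t) := sum_ite_gt _ hjlt
      _ = x j * Jfun m x * ((∑ t ∈ Finset.range (2*N), eps m t)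
            - ∑ t ∈ Finset.range ((j:ℕ)+1), eps m t) := by
          rw [mul_sub, Finset.mul_sum, Finset.mul_sum]
          congr 1 <;> exact Finset.sum_congr rfl (fun t _ => by ring)
      _ = - (x j * Jfun m x * (if (j:ℕ)+1 < 2*m ∧ Odd ((j:ℕ)+1) then 1 else 0)) := by
          rw [htot, esum]; ring
  have hpb : pb (Jfun m) (fun y => y j) x
      = x j * Jfun m x * ((if (j:ℕ) < 2*m ∧ Odd (j:ℕ) then 1 else 0)
        + (if (j:ℕ)+1 < 2*m ∧ Odd ((j:ℕ)+1) then 1 else 0)) := by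
    rw [pb_coord, hA, hB]
    ring
  constructor
  · intro hj
    rw [hpb]
    have h1 : ((if (j:ℕ) < 2*m ∧ Odd (j:ℕ) then (1:ℝ) else 0)
        + (if (j:ℕ)+1 < 2*m ∧ Odd ((j:ℕ)+1) then 1 else 0)) = 1 := by
      simp only [Nat.odd_iff]
      split_ifs <;> (try omega) <;> norm_num
    rw [h1]; ring
  · intro hj
    rw [hpb]
    have h1 : ¬ ((j:ℕ) < 2*m) := by omega
    have h2 : ¬ ((j:ℕ)+1 < 2*m) := by omega
    simp [h1, h2]
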